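/- For any m ≤ n, the (n+1)-coloured rationals with the colouring obtained by merging colour n into colour m (i.e. recolouring every point of colour n by colour m) is isomorphic as an n-coloured order to the n-coloured rationals. Consequently ℚ_{n+1}(L₀,...,L_{n-1}, L_m) ≅ ℚ_n(L₀,...,L_{n-1}) for any m < n. -/

import Mathlib

/-- `Q` together with the colouring `c : Q → Fin n` is a copy of the `n`-coloured
rationals `ℚ_n`: a countable nonempty dense linear order without endpoints in which
each of the `n` colours occurs interdensely. -/
def IsQn (n : ℕ) (Q : Type*) [LinearOrder Q] (c : Q → Fin n) : Prop :=
  Countable Q ∧ Nonempty Q ∧ DenselyOrdered Q ∧ NoMinOrder Q ∧ NoMaxOrder Q ∧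
    ∀ x y : Q, x < y → ∀ i : Fin n, ∃ z : Q, x < z ∧ z < y ∧ c z = i

noncomputable section

namespace QnMergeAux

open Order

variable {n : ℕ} {α β : Type*} [LinearOrder α] [LinearOrder β]

/-- Coloured version of `Order.exists_between_finsets`. -/
theorem exists_between_finsets_col {cβ : β → Fin n} (hβ : IsQn n β cβ)
    (lo hi : Finset β) (lo_lt_hi : ∀ x ∈ lo, ∀ y ∈ hi, x < y) (i : Fin n) :
    ∃ m : β, (∀ x ∈ lo, x < m) ∧ (∀ y ∈ hi, m < y) ∧ cβ m = i := by
  obtain ⟨_, hne, hdense, hmin, hmax, hint⟩ := hβ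
  obtain ⟨u, hu1, hu2⟩ := Order.exists_between_finsets lo hi lo_lt_hi
  obtain ⟨v, hv1, hv2⟩ := Order.exists_between_finsets (insert u lo) hi (by
    intro x hx y hy
    rcases Finset.mem_insert.1 hx with rfl | hx
    · exact hu2 y hy
    · exact lo_lt_hi x hx y hy)
  have huv : u < v := hv1 u (Finset.mem_insert_self u lo)
  obtain ⟨z, hz1, hz2, hz3⟩ := hint u v huv i
  exact ⟨z, fun x hx => (hu1 x hx).trans hz1, fun y hy => hz2.trans (hv2 y hy), hz3⟩

/-- Colour-preserving partial isomorphisms. -/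
def CPI (cα : α → Fin n) (cβ : β → Fin n) : Type _ :=
  { f : Finset (α × β) //
    (∀ p ∈ f, ∀ q ∈ f, cmp (Prod.fst p) (Prod.fst q) = cmp (Prod.snd p) (Prod.snd q)) ∧
    ∀ p ∈ f, cβ (Prod.snd p) = cα (Prod.fst p) }

variable {cα : α → Fin n} {cβ : β → Fin n}

instance : Inhabited (CPI cα cβ) :=
  ⟨⟨∅, fun _ h => (Finset.notMem_empty _ h).elim, fun _ h => (Finset.notMem_empty _ h).elim⟩⟩

instance : Preorder (CPI cα cβ) := Subtype.preorder _

theorem exists_across (hβ : IsQn n β cβ) (f : CPI cα cβ) (a : α) :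
    ∃ b : β, (∀ p ∈ f.val, cmp (Prod.fst p) a = cmp (Prod.snd p) b) ∧ cβ b = cα a := by
  by_cases h : ∃ b, (a, b) ∈ f.val
  · obtain ⟨b, hb⟩ := h
    exact ⟨b, fun p hp => f.prop.1 _ hp _ hb, f.prop.2 _ hb⟩
  have key :
      ∀ x ∈ (f.val.filter fun p : α × β => p.fst < a).image Prod.snd,
        ∀ y ∈ (f.val.filter fun p : α × β => a < p.fst).image Prod.snd, x < y := by
    intro x hx y hy
    rw [Finset.mem_image] at hx hy
    rcases hx with ⟨p, hp1, rfl⟩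
    rcases hy with ⟨q, hq1, rfl⟩
    rw [Finset.mem_filter] at hp1 hq1
    rw [← lt_iff_lt_of_cmp_eq_cmp (f.prop.1 _ hp1.1 _ hq1.1)]
    exact lt_trans hp1.right hq1.right
  obtain ⟨b, hb1, hb2, hb3⟩ := exists_between_finsets_col hβ _ _ key (cα a)
  refine ⟨b, ?_, hb3⟩
  rintro ⟨p1, p2⟩ hp
  have hne : p1 ≠ a := fun he => h ⟨p2, he ▸ hp⟩
  rcases lt_or_gt_of_ne hne with hl | hr
  · have : p1 < a ∧ p2 < b :=
      ⟨hl, hb1 _ (Finset.mem_image.mpr ⟨(p1, p2), Finset.mem_filter.mpr ⟨hp, hl⟩, rfl⟩)⟩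
    rw [← cmp_eq_lt_iff, ← cmp_eq_lt_iff] at this
    exact this.1.trans this.2.symm
  · have : a < p1 ∧ b < p2 :=
      ⟨hr, hb2 _ (Finset.mem_image.mpr ⟨(p1, p2), Finset.mem_filter.mpr ⟨hp, hr⟩, rfl⟩)⟩
    rw [← cmp_eq_gt_iff, ← cmp_eq_gt_iff] at this
    exact this.1.trans this.2.symm

theorem exists_across' (hα : IsQn n α cα) (f : CPI cα cβ) (b : β) :
    ∃ a : α, (∀ p ∈ f.val, cmp (Prod.snd p) b = cmp (Prod.fst p) a) ∧ cα a = cβ b := by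
  by_cases h : ∃ a, (a, b) ∈ f.val
  · obtain ⟨a, ha⟩ := h
    exact ⟨a, fun p hp => (f.prop.1 _ hp _ ha).symm, (f.prop.2 _ ha).symm⟩
  have key :
      ∀ x ∈ (f.val.filter fun p : α × β => p.snd < b).image Prod.fst,
        ∀ y ∈ (f.val.filter fun p : α × β => b < p.snd).image Prod.fst, x < y := by
    intro x hx y hy
    rw [Finset.mem_image] at hx hy
    rcases hx with ⟨p, hp1, rfl⟩
    rcases hy with ⟨q, hq1, rfl⟩
    rw [Finset.mem_filter] at hp1 hq1
    rw [lt_iff_lt_of_cmp_eq_cmp (f.prop.1 _ hp1.1 _ hq1.1)]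
    exact lt_trans hp1.right hq1.right
  obtain ⟨a, ha1, ha2, ha3⟩ := exists_between_finsets_col hα _ _ key (cβ b)
  refine ⟨a, ?_, ha3⟩
  rintro ⟨p1, p2⟩ hp
  have hne : p2 ≠ b := fun he => h ⟨p1, he ▸ hp⟩
  rcases lt_or_gt_of_ne hne with hl | hr
  · have : p2 < b ∧ p1 < a :=
      ⟨hl, ha1 _ (Finset.mem_image.mpr ⟨(p1, p2), Finset.mem_filter.mpr ⟨hp, hl⟩, rfl⟩)⟩
    rw [← cmp_eq_lt_iff, ← cmp_eq_lt_iff] at this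
    exact this.1.trans this.2.symm
  · have : b < p2 ∧ a < p1 :=
      ⟨hr, ha2 _ (Finset.mem_image.mpr ⟨(p1, p2), Finset.mem_filter.mpr ⟨hp, hr⟩, rfl⟩)⟩
    rw [← cmp_eq_gt_iff, ← cmp_eq_gt_iff] at this
    exact this.1.trans this.2.symm

/-- Partial isos defined at `a : α` are cofinal. -/
def definedAtLeft (hβ : IsQn n β cβ) (a : α) : Cofinal (CPI cα cβ) where
  carrier := {f | ∃ b : β, (a, b) ∈ f.val}
  isCofinal f := by
    obtain ⟨b, ab, hcol⟩ := exists_across hβ f a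
    refine ⟨⟨insert (a, b) f.val, fun p hp q hq => ?_, fun p hp => ?_⟩,
      ⟨b, Finset.mem_insert_self _ _⟩, Finset.subset_insert _ _⟩
    · rw [Finset.mem_insert] at hp hq
      rcases hp with rfl | pf <;> rcases hq with rfl | qf
      · simp only [cmp_self_eq_eq]
      · rw [cmp_eq_cmp_symm]; exact ab _ qf
      · exact ab _ pf
      · exact f.prop.1 _ pf _ qf
    · rw [Finset.mem_insert] at hp
      rcases hp with rfl | pf
      · exact hcol
      · exact f.prop.2 _ pf

/-- Partial isos defined at `b : β` are cofinal. -/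
def definedAtRight (hα : IsQn n α cα) (b : β) : Cofinal (CPI cα cβ) where
  carrier := {f | ∃ a : α, (a, b) ∈ f.val}
  isCofinal f := by
    obtain ⟨a, ab, hcol⟩ := exists_across' hα f b
    refine ⟨⟨insert (a, b) f.val, fun p hp q hq => ?_, fun p hp => ?_⟩,
      ⟨a, Finset.mem_insert_self _ _⟩, Finset.subset_insert _ _⟩
    · rw [Finset.mem_insert] at hp hq
      rcases hp with rfl | pf <;> rcases hq with rfl | qf
      · simp only [cmp_self_eq_eq]
      · rw [cmp_eq_cmp_symm]; exact (ab _ qf).symm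
      · exact (ab _ pf).symm
      · exact f.prop.1 _ pf _ qf
    · rw [Finset.mem_insert] at hp
      rcases hp with rfl | pf
      · exact hcol.symm
      · exact f.prop.2 _ pf

/-- Coloured Cantor theorem: any two copies of the `n`-coloured rationals are
colour-preservingly order isomorphic. -/
theorem isQn_iso (hα : IsQn n α cα) (hβ : IsQn n β cβ) :
    ∃ e : α ≃o β, ∀ x : α, cβ (e x) = cα x := by
  haveI : Countable α := hα.1
  haveI : Countable β := hβ.1
  cases nonempty_encodable (α ⊕ β)
  let to_cofinal : α ⊕ β → Cofinal (CPI cα cβ) := fun p =>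
    Sum.recOn p (fun a => definedAtLeft hβ a) (fun b => definedAtRight hα b)
  let I : Order.Ideal (CPI cα cβ) := Order.idealOfCofinals default to_cofinal
  let F : ∀ a : α, { b : β // ∃ f ∈ I, (a, b) ∈ Subtype.val f } := fun a =>
    Classical.indefiniteDescription _ (by
      obtain ⟨f, ⟨b, hb⟩, hf⟩ :=
        Order.cofinal_meets_idealOfCofinals default to_cofinal (Sum.inl a)
      exact ⟨b, f, hf, hb⟩)
  let G : ∀ b : β, { a : α // ∃ f ∈ I, (a, b) ∈ Subtype.val f } := fun b =>
    Classical.indefiniteDescription _ (by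
      obtain ⟨f, ⟨a, ha⟩, hf⟩ :=
        Order.cofinal_meets_idealOfCofinals default to_cofinal (Sum.inr b)
      exact ⟨a, f, hf, ha⟩)
  refine ⟨OrderIso.ofCmpEqCmp (fun a => (F a).val) (fun b => (G b).val) fun a b => ?_, fun a => ?_⟩
  · rcases (F a).prop with ⟨f, hf, ha⟩
    rcases (G b).prop with ⟨g, hg, hb⟩
    rcases I.directed _ hf _ hg with ⟨m, _, fm, gm⟩
    exact m.prop.1 (a, _) (fm ha) (_, b) (gm hb)
  · rcases (F a).prop with ⟨f, _, ha⟩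
    exact f.prop.2 _ ha

theorem cast_lt_iff {ι : Type*} {L : ι → Type*} [∀ i, LinearOrder (L i)] {i j : ι}
    (hij : i = j) (h : L i = L j) (a b : L i) : cast h a < cast h b ↔ a < b := by
  subst hij; exact Iff.rfl

end QnMergeAux

end

/-- Merging colour n into colour m in ℚ_{n+1} yields a copy of ℚ_n, and
consequently ℚ_{n+1}(L₀,...,L_{n-1},L_m) ≅ ℚ_n(L₀,...,L_{n-1}). -/
theorem Qn_merge (n : ℕ) (m : Fin n) (Q Q' : Type*) [LinearOrder Q] [LinearOrder Q']
    (c : Q → Fin (n + 1)) (c' : Q' → Fin n)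
    (hQ : IsQn (n + 1) Q c) (hQ' : IsQn n Q' c')
    (merge : Fin (n + 1) → Fin n)
    (hmerge : ∀ i : Fin (n + 1), merge i = if h : (i : ℕ) < n then ⟨i, h⟩ else m)
    (L : Fin n → Type*) [∀ i, LinearOrder (L i)] :
    (∃ e : Q ≃o Q', ∀ x : Q, c' (e x) = merge (c x)) ∧
      Nonempty ((Σₗ q : Q, L (merge (c q))) ≃o (Σₗ q' : Q', L (c' q'))) := by
  have hQm : IsQn n Q (fun q => merge (c q)) := by
    obtain ⟨h1, h2, h3, h4, h5, h6⟩ := hQ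
    refine ⟨h1, h2, h3, h4, h5, fun x y hxy i => ?_⟩
    obtain ⟨z, hz1, hz2, hz3⟩ := h6 x y hxy ⟨(i : ℕ), i.2.trans (Nat.lt_succ_self n)⟩
    refine ⟨z, hz1, hz2, ?_⟩
    show merge (c z) = i
    rw [hz3, hmerge]
    simp [i.2]
  obtain ⟨e, he⟩ := QnMergeAux.isQn_iso hQm hQ'
  refine ⟨⟨e, he⟩, ?_⟩
  have hL : ∀ q : Q, L (merge (c q)) = L (c' (e q)) := fun q => congrArg L (he q).symm
  let f : (Σₗ q : Q, L (merge (c q))) → (Σₗ q' : Q', L (c' q')) :=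
    fun x => ⟨e x.1, cast (hL x.1) x.2⟩
  have hmono : StrictMono f := by
    intro x y hlt
    obtain ⟨i, a⟩ := x
    obtain ⟨j, b⟩ := y
    replace hlt := Sigma.Lex.lt_def.1 hlt
    refine Sigma.Lex.lt_def.2 ?_
    rcases hlt with h | ⟨h, h2⟩
    · exact Or.inl (e.strictMono h)
    · dsimp only at h
      subst h
      refine Or.inr ⟨rfl, ?_⟩
      show cast (hL i) a < cast (hL i) b
      exact (QnMergeAux.cast_lt_iff (he i).symm _ a b).2 h2
  have hsurj : Function.Surjective f := by
    intro y
    obtain ⟨j, b⟩ := y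
    have hj : c' j = merge (c (e.symm j)) := by
      rw [← he (e.symm j), e.apply_symm_apply]
    refine ⟨⟨e.symm j, cast (congrArg L hj) b⟩, ?_⟩
    show (⟨e (e.symm j), cast (hL (e.symm j)) (cast (congrArg L hj) b)⟩ : Σₗ q' : Q', L (c' q'))
      = ⟨j, b⟩
    refine Sigma.ext (e.apply_symm_apply j) ?_
    exact (cast_heq _ _).trans (cast_heq _ _)
  exact ⟨hmono.orderIsoOfSurjective f hsurj⟩
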